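/- There exists a constant C = C(d) such that for every d ≥ 1, every k₀ ∈ ℤ^d with k₀ ≠ 0, every α ∈ ℝ, every M ≥ 1 and every R ≥ 1: the number of k ∈ ℤ^d with |k| < R and |k₀ · k − α| < M is at most C (M/|k₀| + 1) R^{d−1}. -/

import Mathlib

open scoped BigOperators Classical

noncomputable section

namespace KWE

/-- squared Euclidean norm of a lattice point -/
def nsq {d : ℕ} (k : Fin d → ℤ) : ℝ := ∑ i, ((k i : ℝ))^2

/-- Euclidean norm of a lattice point -/
def znorm {d : ℕ} (k : Fin d → ℤ) : ℝ := Real.sqrt (nsq k)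

/-- Counting lattice points in a ball lying close to a hyperplane. -/
theorem lattice_points_near_hyperplane (d : ℕ) (hd : 1 ≤ d) :
    ∃ C : ℝ, 0 < C ∧
      ∀ k₀ : Fin d → ℤ, k₀ ≠ 0 →
      ∀ α M R : ℝ, 1 ≤ M → 1 ≤ R →
        (Set.ncard {k : Fin d → ℤ |
            znorm k < R ∧ |(∑ i, (k₀ i : ℝ) * (k i : ℝ)) - α| < M} : ℝ)
        ≤ C * (M / znorm k₀ + 1) * R ^ ((d:ℝ) - 1) := by
  have hd0 : 0 < d := hd
  have hsd : (0:ℝ) < Real.sqrt d := Real.sqrt_pos.mpr (by exact_mod_cast hd0)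
  refine ⟨5 ^ (d - 1) * (2 * Real.sqrt d + 1), by positivity, ?_⟩
  intro k₀ hk₀ α M R hM hR
  have hM0 : (0:ℝ) < M := lt_of_lt_of_le one_pos hM
  have hR0 : (0:ℝ) < R := lt_of_lt_of_le one_pos hR
  -- choose a coordinate of maximal absolute value
  have : Nonempty (Fin d) := ⟨⟨0, hd0⟩⟩
  obtain ⟨i₀, hi₀⟩ := Finite.exists_max (fun j => |k₀ j|)
  set c : ℤ := k₀ i₀ with hc
  have hc0 : c ≠ 0 := by
    intro h
    apply hk₀
    funext j
    have := hi₀ j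
    rw [h] at this
    show k₀ j = 0
    exact abs_eq_zero.mp (le_antisymm (by simpa using this) (abs_nonneg _))
  have hcR : (0:ℝ) < |(c:ℝ)| := by
    simpa using abs_pos.mpr (show ((c:ℝ)) ≠ 0 by exact_mod_cast hc0)
  -- znorm k₀ ≤ √d * |c|
  have hnsq_pos : 0 < nsq k₀ := by
    have : ((c:ℝ))^2 ≤ nsq k₀ := by
      apply Finset.single_le_sum (f := fun i => ((k₀ i : ℝ))^2)
        (fun i _ => sq_nonneg _) (Finset.mem_univ i₀)
    nlinarith [hcR, sq_abs ((c:ℝ))]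
  have hzpos : 0 < znorm k₀ := Real.sqrt_pos.mpr hnsq_pos
  have hznorm_le : znorm k₀ ≤ Real.sqrt d * |(c:ℝ)| := by
    have hsum : nsq k₀ ≤ d * ((c:ℝ))^2 := by
      have : ∀ i ∈ Finset.univ, ((k₀ i : ℝ))^2 ≤ ((c:ℝ))^2 := by
        intro i _
        have := hi₀ i
        have h2 : |(k₀ i : ℝ)| ≤ |(c:ℝ)| := by exact_mod_cast this
        nlinarith [abs_nonneg ((k₀ i : ℝ)), sq_abs ((k₀ i : ℝ)), sq_abs ((c:ℝ))]
      calc nsq k₀ ≤ ∑ _i : Fin d, ((c:ℝ))^2 := Finset.sum_le_sum this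
        _ = d * ((c:ℝ))^2 := by simp [mul_comm]
    have : znorm k₀ ≤ Real.sqrt (d * ((c:ℝ))^2) := Real.sqrt_le_sqrt hsum
    calc znorm k₀ ≤ Real.sqrt (d * ((c:ℝ))^2) := this
      _ = Real.sqrt d * |(c:ℝ)| := by
          rw [Real.sqrt_mul (by positivity), Real.sqrt_sq_eq_abs]
  -- the bounding box
  set N : Finset ℤ := Finset.Icc (-⌈R⌉) ⌈R⌉ with hN
  set B : Finset (Fin d → ℤ) := Fintype.piFinset (fun _ => N) with hB
  set S : Set (Fin d → ℤ) :=
    {k : Fin d → ℤ | znorm k < R ∧ |(∑ i, (k₀ i : ℝ) * (k i : ℝ)) - α| < M} with hS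
  -- coordinates of points in S are bounded
  have hcoord : ∀ k ∈ S, ∀ j, k j ∈ N := by
    intro k hk j
    have hkR : znorm k < R := hk.1
    have h1 : ((k j : ℝ))^2 ≤ nsq k := by
      apply Finset.single_le_sum (f := fun i => ((k i : ℝ))^2)
        (fun i _ => sq_nonneg _) (Finset.mem_univ j)
    have hnsq_nonneg : 0 ≤ nsq k := Finset.sum_nonneg fun i _ => sq_nonneg _
    have h2 : |(k j : ℝ)| ≤ R := by
      have := Real.sqrt_le_sqrt h1
      rw [Real.sqrt_sq_eq_abs] at this
      exact le_of_lt (lt_of_le_of_lt this hkR)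
    have h3 : (k j : ℝ) ≤ ⌈R⌉ := le_trans (le_trans (le_abs_self _) h2) (Int.le_ceil R)
    have h4 : -(⌈R⌉:ℝ) ≤ (k j : ℝ) := by
      have := neg_abs_le ((k j : ℝ))
      linarith [Int.le_ceil R]
    rw [hN, Finset.mem_Icc]
    constructor
    · exact_mod_cast h4
    · exact_mod_cast h3
  set T : Finset (Fin d → ℤ) :=
    B.filter (fun k => znorm k < R ∧ |(∑ i, (k₀ i : ℝ) * (k i : ℝ)) - α| < M) with hT
  have hST : S = ↑T := by
    ext k
    simp only [hT, Finset.coe_filter, Set.mem_setOf_eq, hB, Fintype.mem_piFinset]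
    constructor
    · intro hk
      exact ⟨fun j => hcoord k hk j, hk⟩
    · intro hk
      exact hk.2
  have hncard : Set.ncard S = T.card := by rw [hST, Set.ncard_coe_finset]
  -- fiber-counting: project out coordinate i₀
  set f : ℤ := ⌊2 * M / |(c:ℝ)|⌋ with hf
  have hf0 : 0 ≤ f := Int.floor_nonneg.mpr (by positivity)
  set n : ℕ := (f + 1).toNat with hn
  set π : (Fin d → ℤ) → (Fin d → ℤ) := fun k => Function.update k i₀ 0 with hπ
  set t : Finset (Fin d → ℤ) :=
    Fintype.piFinset (fun j => if j = i₀ then ({0} : Finset ℤ) else N) with ht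
  have hmaps : ∀ k ∈ T, π k ∈ t := by
    intro k hk
    rw [ht, Fintype.mem_piFinset]
    intro j
    by_cases hj : j = i₀
    · subst hj; simp [hπ, Function.update_self]
    · simp only [hπ, Function.update_of_ne hj, if_neg hj]
      exact hcoord k (by rw [hST]; exact Finset.mem_coe.mpr hk) j
  have hfiber : ∀ m ∈ t, (T.filter (fun k => π k = m)).card ≤ n := by
    intro m _
    set β : ℝ := α - ∑ i, (k₀ i : ℝ) * (m i : ℝ) with hβ
    set lo : ℤ := ⌈β / (c:ℝ) - M / |(c:ℝ)|⌉ with hlo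
    have key : ∀ k ∈ T.filter (fun k => π k = m), k i₀ ∈ Finset.Icc lo (lo + f) := by
      intro k hk
      rw [Finset.mem_filter] at hk
      obtain ⟨hkT, hkm⟩ := hk
      rw [hT, Finset.mem_filter] at hkT
      have hsum : ∑ i, (k₀ i : ℝ) * (k i : ℝ)
          = (c:ℝ) * (k i₀ : ℝ) + ∑ i, (k₀ i : ℝ) * (m i : ℝ) := by
        rw [← hkm]
        rw [← Finset.add_sum_erase _ _ (Finset.mem_univ i₀),
            ← Finset.add_sum_erase _ (fun i => (k₀ i : ℝ) * ((π k i : ℤ) : ℝ))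
              (Finset.mem_univ i₀)]
        simp only [hπ, Function.update_self, Int.cast_zero, mul_zero, zero_add, hc]
        congr 1
        apply Finset.sum_congr rfl
        intro j hj
        rw [Function.update_of_ne (Finset.ne_of_mem_erase hj)]
      have hcond : |(c:ℝ) * (k i₀ : ℝ) - β| < M := by
        have := hkT.2.2
        rw [hsum] at this
        have : |(c:ℝ) * (k i₀ : ℝ) + ∑ i, (k₀ i : ℝ) * (m i : ℝ) - α| < M := this
        rw [hβ]
        convert this using 2
        ring
      -- so k i₀ lies in an interval of length 2M/|c|
      have hdist : |(k i₀ : ℝ) - β / (c:ℝ)| < M / |(c:ℝ)| := by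
        rw [abs_sub_comm] at hcond
        have h1 : |β / (c:ℝ) - (k i₀ : ℝ)| = |β - (c:ℝ) * (k i₀:ℝ)| / |(c:ℝ)| := by
          rw [← abs_div]
          congr 1
          field_simp
        rw [abs_sub_comm, h1]
        gcongr
      rw [Finset.mem_Icc]
      have hlow : lo ≤ k i₀ := by
        rw [hlo]
        apply Int.ceil_le.mpr
        have := abs_lt.mp hdist
        linarith [this.1]
      refine ⟨hlow, ?_⟩
      have : ((k i₀ - lo : ℤ) : ℝ) ≤ 2 * M / |(c:ℝ)| := by
        have h1 : (β / (c:ℝ) - M / |(c:ℝ)|) ≤ (lo : ℝ) := Int.le_ceil _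
        have h2 : (k i₀ : ℝ) < β / (c:ℝ) + M / |(c:ℝ)| := by
          have := abs_lt.mp hdist
          linarith [this.2]
        push_cast
        have : (k i₀ : ℝ) - lo < 2 * M / |(c:ℝ)| := by
          have h3 : (k i₀ : ℝ) - lo < (β / (c:ℝ) + M / |(c:ℝ)|) - (β / (c:ℝ) - M / |(c:ℝ)|) := by
            linarith
          calc (k i₀ : ℝ) - lo < _ := h3
            _ = 2 * (M / |(c:ℝ)|) := by ring
            _ = 2 * M / |(c:ℝ)| := by rw [mul_div_assoc]
        linarith
      have := Int.le_floor.mpr this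
      omega
    calc (T.filter (fun k => π k = m)).card ≤ (Finset.Icc lo (lo + f)).card := by
          apply Finset.card_le_card_of_injOn (fun k => k i₀)
            (fun k hk => Finset.mem_coe.mpr (key k (Finset.mem_coe.mp hk)))
          intro k hk k' hk' hkk'
          rw [Finset.mem_coe, Finset.mem_filter] at hk hk'
          funext j
          by_cases hj : j = i₀
          · subst hj; exact hkk'
          · have := congrFun (hk.2.trans hk'.2.symm) j
            simpa [hπ, Function.update_of_ne hj] using this
      _ = n := by rw [Int.card_Icc, hn]; congr 1; omega
  have hcardT : T.card ≤ n * t.card :=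
    Finset.card_le_mul_card_image_of_maps_to hmaps n hfiber
  -- card of t
  have hNcard : (N.card : ℝ) ≤ 5 * R := by
    rw [hN, Int.card_Icc]
    have hceil : (⌈R⌉ : ℝ) ≤ R + 1 := le_of_lt (Int.ceil_lt_add_one R)
    have h1 : (0:ℝ) < ⌈R⌉ := lt_of_lt_of_le hR0 (Int.le_ceil R)
    have h1' : (0:ℤ) < ⌈R⌉ := by exact_mod_cast h1
    have h2 : ((⌈R⌉ + 1 - -⌈R⌉).toNat : ℤ) = 2 * ⌈R⌉ + 1 := by omega
    have h3 : ((⌈R⌉ + 1 - -⌈R⌉).toNat : ℝ) = 2 * (⌈R⌉ : ℝ) + 1 := by exact_mod_cast h2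
    rw [h3]
    linarith
  have htcard : t.card = N.card ^ (d - 1) := by
    rw [ht, Fintype.card_piFinset]
    rw [← Finset.prod_erase_mul _ _ (Finset.mem_univ i₀)]
    simp only [if_pos rfl, Finset.card_singleton, mul_one]
    rw [Finset.prod_congr rfl (fun j hj => by
      rw [if_neg (Finset.ne_of_mem_erase hj)]), Finset.prod_const]
    congr 1
    simp [Finset.card_erase_of_mem, Finset.card_univ]
  -- put the numeric bounds together
  have hn_le : (n : ℝ) ≤ 2 * Real.sqrt d * (M / znorm k₀) + 1 := by
    have h1 : (n : ℝ) = (f : ℝ) + 1 := by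
      have h : ((f + 1).toNat : ℤ) = f + 1 := Int.toNat_of_nonneg (by omega)
      rw [hn]; exact_mod_cast h
    have h2 : (f : ℝ) ≤ 2 * M / |(c:ℝ)| := Int.floor_le _
    have h3 : 2 * M / |(c:ℝ)| ≤ 2 * Real.sqrt d * (M / znorm k₀) := by
      rw [← mul_div_assoc, div_le_div_iff₀ hcR hzpos]
      nlinarith [hznorm_le, hM0, hzpos, hcR]
    linarith
  have hfinal : ((T.card : ℕ) : ℝ) ≤
      (5 ^ (d-1) * (2 * Real.sqrt d + 1)) * (M / znorm k₀ + 1) * R ^ (d - 1) := by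
    have h1 : ((T.card : ℕ) : ℝ) ≤ (n : ℝ) * (N.card : ℝ) ^ (d - 1) := by
      have := hcardT
      rw [htcard] at this
      exact_mod_cast this
    have hq : (0:ℝ) ≤ M / znorm k₀ := by positivity
    have h2 : (n : ℝ) ≤ (2 * Real.sqrt d + 1) * (M / znorm k₀ + 1) := by
      have : 2 * Real.sqrt d * (M / znorm k₀) + 1 ≤ (2 * Real.sqrt d + 1) * (M / znorm k₀ + 1) := by
        nlinarith [hsd, hq]
      linarith [hn_le]
    have h3 : ((N.card : ℝ)) ^ (d-1) ≤ (5 * R) ^ (d-1) :=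
      pow_le_pow_left₀ (by positivity) hNcard _
    calc ((T.card : ℕ) : ℝ) ≤ (n : ℝ) * (N.card : ℝ) ^ (d - 1) := h1
      _ ≤ ((2 * Real.sqrt d + 1) * (M / znorm k₀ + 1)) * ((5 * R) ^ (d-1)) := by
          apply mul_le_mul h2 h3 (by positivity) (by positivity)
      _ = (5 ^ (d-1) * (2 * Real.sqrt d + 1)) * (M / znorm k₀ + 1) * R ^ (d - 1) := by
          rw [mul_pow]; ring
  have hrpow : R ^ ((d:ℝ) - 1) = R ^ (d - 1) := by
    rw [show ((d:ℝ) - 1) = ((d - 1 : ℕ) : ℝ) by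
      push_cast [Nat.cast_sub hd]; ring]
    exact Real.rpow_natCast R (d - 1)
  rw [hrpow, hncard]
  exact_mod_cast hfinal

end KWE
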